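/- arXiv:1811.08001 — 8 statements merged into one kernel-verified Lean document; each statement's English description precedes it below -/
import Mathlib

section
/- If I is an ideal of S and N a subsemimodule of M with IM ⊆ N, then the radical of the ideal I ⊕̃ N in the expectation semiring S ⊕̃ M equals √I ⊕̃ M, i.e., (s,m) has some power in I ⊕̃ N if and only if some power of s lies in I. -/
noncomputable instance expOpp {S M : Type*} [CommSemiring S] [AddCommMonoid M] [Module S M] :
    Module Sᵐᵒᵖ M :=
  Module.compHom M ((RingHom.id S).fromOpposite mul_comm)

instance expCentral {S M : Type*} [CommSemiring S] [AddCommMonoid M] [Module S M] :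
    IsCentralScalar S M :=
  ⟨fun _ _ => rfl⟩

/-- If IM ⊆ N then √(I ⊕̃ N) = √I ⊕̃ M: an element of S ⊕̃ M has
some positive power in I ⊕̃ N iff some positive power of its first component lies in I. -/
theorem stmt4 (S M : Type*) [CommSemiring S] [AddCommMonoid M] [Module S M]
    (I : Ideal S) (N : Submodule S M) (hIM : ∀ a ∈ I, ∀ m : M, a • m ∈ N) :
    ∀ x : TrivSqZeroExt S M,
      (∃ k : ℕ, 1 ≤ k ∧ (x ^ k).fst ∈ I ∧ (x ^ k).snd ∈ N) ↔
        (∃ k : ℕ, 1 ≤ k ∧ x.fst ^ k ∈ I) := by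
  intro x
  constructor
  · rintro ⟨k, hk, hI, -⟩
    exact ⟨k, hk, by rwa [TrivSqZeroExt.fst_pow] at hI⟩
  · rintro ⟨k, hk, hI⟩
    refine ⟨k + 1, le_add_self, ?_, ?_⟩
    · rw [TrivSqZeroExt.fst_pow, pow_succ]
      exact I.mul_mem_right _ hI
    · rw [TrivSqZeroExt.snd_pow]
      exact N.smul_of_tower_mem _ (by simpa using hIM _ hI x.snd)
end

section
/- Every subtractive prime ideal P of the expectation semiring S ⊕̃ M has the form P = 𝔭 × M, where 𝔭 is a subtractive prime ideal of S. -/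
/-- Every subtractive prime ideal P of S ⊕̃ M has the form
𝔭 × M for a subtractive prime ideal 𝔭 of S. -/
theorem stmt7 (S M : Type*) [CommSemiring S] [AddCommMonoid M] [Module S M]
    (P : Ideal (TrivSqZeroExt S M)) (hP : P.IsPrime)
    (hsub : ∀ x y : TrivSqZeroExt S M, x + y ∈ P → x ∈ P → y ∈ P) :
    ∃ p : Ideal S, p.IsPrime ∧ (∀ a b : S, a + b ∈ p → a ∈ p → b ∈ p) ∧
      ∀ x : TrivSqZeroExt S M, x ∈ P ↔ x.fst ∈ p := by
  have hinr : ∀ m : M, TrivSqZeroExt.inr m ∈ P := by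
    intro m
    have h0 : (TrivSqZeroExt.inr m : TrivSqZeroExt S M) * TrivSqZeroExt.inr m = 0 := by
      ext <;> simp
    rcases hP.mem_or_mem (h0 ▸ P.zero_mem) with h | h <;> exact h
  refine ⟨P.comap (TrivSqZeroExt.inlHom S M), Ideal.IsPrime.comap _ , ?_, ?_⟩
  · intro a b hab ha
    exact hsub _ _ (by simpa using hab) ha
  · intro x
    constructor
    · intro hx
      have : TrivSqZeroExt.inr x.snd + TrivSqZeroExt.inl x.fst ∈ P := by
        rw [add_comm, TrivSqZeroExt.inl_fst_add_inr_snd_eq]; exact hx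
      exact hsub _ _ this (hinr _)
    · intro hx
      have : TrivSqZeroExt.inl x.fst + TrivSqZeroExt.inr x.snd ∈ P :=
        P.add_mem hx (hinr _)
      rwa [TrivSqZeroExt.inl_fst_add_inr_snd_eq] at this
end

section
/- If J is a subtractive ideal of the expectation semiring S ⊕̃ M containing {0} × M, then J = I × M for some ideal I of S, namely I = {s ∈ S : ∃ m ∈ M, (s,m) ∈ J}. -/
/-- A subtractive ideal J of S ⊕̃ M containing {0} × M equals
I × M, where I = {s : ∃ m, (s,m) ∈ J}. -/
theorem stmt8 (S M : Type*) [CommSemiring S] [AddCommMonoid M] [Module S M]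
    (J : Ideal (TrivSqZeroExt S M))
    (hsub : ∀ x y : TrivSqZeroExt S M, x + y ∈ J → x ∈ J → y ∈ J)
    (hM : ∀ x : TrivSqZeroExt S M, x.fst = 0 → x ∈ J) :
    ∃ I : Ideal S,
      (∀ s : S, s ∈ I ↔ ∃ x ∈ J, TrivSqZeroExt.fst x = s) ∧
      (∀ x : TrivSqZeroExt S M, x ∈ J ↔ x.fst ∈ I) := by
  refine ⟨{ carrier := {s | ∃ x ∈ J, TrivSqZeroExt.fst x = s}
            add_mem' := ?_
            zero_mem' := ⟨0, J.zero_mem, rfl⟩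
            smul_mem' := ?_ }, fun s => Iff.rfl, ?_⟩
  · rintro a b ⟨x, hx, rfl⟩ ⟨y, hy, rfl⟩
    exact ⟨x + y, J.add_mem hx hy, rfl⟩
  · rintro r s ⟨x, hx, rfl⟩
    exact ⟨TrivSqZeroExt.inl r * x, J.mul_mem_left _ hx, by simp⟩
  · intro x
    constructor
    · exact fun hx => ⟨x, hx, rfl⟩
    · rintro ⟨y, hy, hfst⟩
      have h0 : (TrivSqZeroExt.inr y.snd : TrivSqZeroExt S M) ∈ J := hM _ (by simp)
      have h1 : x + TrivSqZeroExt.inr y.snd = y + TrivSqZeroExt.inr x.snd := by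
        ext <;> simp [hfst, add_comm]
      have h2 : x + TrivSqZeroExt.inr y.snd ∈ J := by
        rw [h1]; exact J.add_mem hy (hM _ (by simp))
      exact hsub _ _ (by rwa [add_comm] at h2) h0
end

section
/- If the expectation semiring S ⊕̃ M is Noetherian (every ascending chain of ideals stabilizes, equivalently every ideal is finitely generated), then S is a Noetherian semiring and M is a finitely generated S-semimodule. -/
/-- If S ⊕̃ M is Noetherian then S is Noetherian and M is a
finitely generated S-semimodule. -/
theorem stmt9 (S M : Type*) [CommSemiring S] [AddCommMonoid M] [Module S M]
    (h : IsNoetherianRing (TrivSqZeroExt S M)) :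
    IsNoetherianRing S ∧ Module.Finite S M := by
  set A := TrivSqZeroExt S M with hA
  let f : A →+* S := (TrivSqZeroExt.fstHom S S M).toRingHom
  letI : Algebra A S := f.toAlgebra
  -- S is an A-module via fst, and fst : A →ₗ[A] S is surjective
  let fl : A →ₗ[A] S :=
    { toFun := TrivSqZeroExt.fst
      map_add' := fun _ _ => rfl
      map_smul' := fun a b => by
        show TrivSqZeroExt.fst (a * b) = f a * TrivSqZeroExt.fst b
        rw [TrivSqZeroExt.fst_mul]
        rfl }
  have hsurj : LinearMap.range fl = ⊤ := by
    rw [LinearMap.range_eq_top]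
    intro s
    exact ⟨TrivSqZeroExt.inl s, TrivSqZeroExt.fst_inl M s⟩
  haveI hNA : IsNoetherian A A := h
  haveI hNS : IsNoetherian A S := isNoetherian_of_surjective fl hsurj
  haveI hS : IsNoetherianRing S := isNoetherian_of_tower A hNS
  -- the ideal {x | fst x = 0} ≅ M
  let I : Ideal A :=
    { carrier := {x | TrivSqZeroExt.fst x = 0}
      add_mem' := fun {x y} hx hy => by
        show TrivSqZeroExt.fst (x + y) = 0
        rw [TrivSqZeroExt.fst_add, hx, hy, add_zero]
      zero_mem' := TrivSqZeroExt.fst_zero (M := M)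
      smul_mem' := fun a {x} hx => by
        show TrivSqZeroExt.fst (a • x) = 0
        rw [smul_eq_mul, TrivSqZeroExt.fst_mul, hx, mul_zero] }
  classical
  obtain ⟨s, hs⟩ := IsNoetherian.noetherian I
  have hsub : (↑s : Set A) ⊆ I := hs ▸ Submodule.subset_span
  have hM : Module.Finite S M := by
    refine ⟨⟨s.image TrivSqZeroExt.snd, ?_⟩⟩
    have key : ∀ x ∈ Submodule.span A (↑s : Set A), TrivSqZeroExt.fst x = 0 ∧
        TrivSqZeroExt.snd x ∈
          Submodule.span S ((s.image TrivSqZeroExt.snd : Finset M) : Set M) := by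
      intro x hx
      induction hx using Submodule.span_induction with
      | mem x hx =>
        exact ⟨hsub hx, Submodule.subset_span (by
          simpa using Finset.mem_image_of_mem TrivSqZeroExt.snd hx)⟩
      | zero => simp
      | add x y _ _ hx hy =>
        refine ⟨by rw [TrivSqZeroExt.fst_add, hx.1, hy.1, add_zero], ?_⟩
        rw [TrivSqZeroExt.snd_add]
        exact Submodule.add_mem _ hx.2 hy.2
      | smul a x _ hx =>
        refine ⟨by rw [smul_eq_mul, TrivSqZeroExt.fst_mul, hx.1, mul_zero], ?_⟩
        rw [smul_eq_mul, TrivSqZeroExt.snd_mul, hx.1]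
        simp only [MulOpposite.op_zero, zero_smul, add_zero]
        exact Submodule.smul_mem _ _ hx.2
    rw [eq_top_iff]
    rintro m -
    have hmI : TrivSqZeroExt.inr m ∈ I := TrivSqZeroExt.fst_inr S m
    rw [← hs] at hmI
    simpa using (key _ hmI).2
  exact ⟨hS, hM⟩
end

section
/- If N is a primary subsemimodule of M (N ≠ M, and sm ∈ N with m ∉ N implies sⁿM ⊆ N for some n ≥ 1), then the radical √N := √[N:M] is a prime ideal of S, where [N:M] = {s ∈ S : sM ⊆ N}. -/
/-- If N is a primary subsemimodule of M, then
√N = √[N:M] is a prime ideal of S. -/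
theorem stmt11 (S M : Type*) [CommSemiring S] [AddCommMonoid M] [Module S M]
    (N : Submodule S M) (hN : N ≠ ⊤)
    (hprim : ∀ (s : S) (m : M), s • m ∈ N → m ∉ N →
      ∃ n : ℕ, 1 ≤ n ∧ ∀ x : M, s ^ n • x ∈ N) :
    ∃ P : Ideal S,
      (∀ s : S, s ∈ P ↔ ∃ n : ℕ, 1 ≤ n ∧ ∀ x : M, s ^ n • x ∈ N) ∧
      P.IsPrime := by
  -- the colon ideal [N : M]
  set I : Ideal S :=
    { carrier := {s : S | ∀ x : M, s • x ∈ N}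
      add_mem' := fun {a b} ha hb x => by
        rw [add_smul]; exact N.add_mem (ha x) (hb x)
      zero_mem' := fun x => by rw [zero_smul]; exact N.zero_mem
      smul_mem' := fun c s hs x => by
        rw [smul_eq_mul, mul_smul]; exact N.smul_mem c (hs x) } with hI
  have hInetop : I ≠ ⊤ := by
    intro h
    apply hN
    rw [Submodule.eq_top_iff']
    intro x
    have : (1 : S) ∈ I := h ▸ Submodule.mem_top
    simpa using this x
  have hmem : ∀ s : S, s ∈ I.radical ↔ ∃ n : ℕ, 1 ≤ n ∧ ∀ x : M, s ^ n • x ∈ N := by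
    intro s
    constructor
    · rintro ⟨n, hn⟩
      rcases Nat.eq_zero_or_pos n with rfl | hpos
      · exact absurd ((Ideal.eq_top_iff_one I).mpr (by simpa using hn)) hInetop
      · exact ⟨n, hpos, hn⟩
    · rintro ⟨n, _, hn⟩
      exact ⟨n, hn⟩
  refine ⟨I.radical, hmem, ?_⟩
  constructor
  · intro h
    apply hInetop
    have : (1 : S) ∈ I.radical := h ▸ Submodule.mem_top
    rcases this with ⟨n, hn⟩
    simp only [one_pow] at hn
    exact (Ideal.eq_top_iff_one I).mpr (by simpa using hn)
  · intro a b hab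
    by_cases ha : a ∈ I.radical
    · exact Or.inl ha
    · right
      rcases hab with ⟨n, hn⟩
      have han : a ^ n ∉ I := fun h => ha ⟨n, h⟩
      have : ∃ x : M, a ^ n • x ∉ N := by
        by_contra h
        push_neg at h
        exact han h
      rcases this with ⟨x0, hx0⟩
      have hbn : b ^ n • (a ^ n • x0) ∈ N := by
        rw [← mul_smul, ← mul_pow, mul_comm b a]
        exact hn x0
      rcases hprim (b ^ n) (a ^ n • x0) hbn hx0 with ⟨k, _, hk⟩
      refine ⟨n * k, fun x => ?_⟩
      rw [pow_mul]
      exact hk x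
end

section
/- An element (s,x) of the expectation semiring S ⊕̃ M is a unit if and only if s is a unit of S and x has an additive inverse in M; that is, U(S ⊕̃ M) = U(S) × V(M). -/
/-- (s,x) is a unit of S ⊕̃ M iff s is a unit of S and x has an
additive inverse in M. -/
theorem stmt14 (S M : Type*) [CommSemiring S] [AddCommMonoid M] [Module S M]
    (x : TrivSqZeroExt S M) :
    IsUnit x ↔ IsUnit x.fst ∧ IsAddUnit x.snd := by
  constructor
  · rintro ⟨u, hu⟩
    obtain ⟨y, hxy, hyx⟩ := isUnit_iff_exists.mp ⟨u, hu⟩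
    have h1 : x.fst * y.fst = 1 := by
      have := congrArg TrivSqZeroExt.fst hxy
      simpa using this
    have h2 : y.fst * x.fst = 1 := by
      have := congrArg TrivSqZeroExt.fst hyx
      simpa using this
    refine ⟨isUnit_iff_exists.mpr ⟨y.fst, h1, h2⟩, ?_⟩
    have hsnd : x.fst • y.snd + y.fst • x.snd = 0 := by
      have := congrArg TrivSqZeroExt.snd hxy
      simpa [TrivSqZeroExt.snd_mul, op_smul_eq_smul] using this
    refine isAddUnit_iff_exists.mpr ⟨x.fst • (x.fst • y.snd), ?_, ?_⟩
    · calc x.snd + x.fst • (x.fst • y.snd)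
          = x.fst • (y.fst • x.snd) + x.fst • (x.fst • y.snd) := by
            rw [smul_smul x.fst y.fst, h1, one_smul]
        _ = x.fst • (x.fst • y.snd + y.fst • x.snd) := by
            rw [smul_add, add_comm]
        _ = 0 := by rw [hsnd, smul_zero]
    · calc x.fst • (x.fst • y.snd) + x.snd
          = x.fst • (x.fst • y.snd) + x.fst • (y.fst • x.snd) := by
            rw [smul_smul x.fst y.fst, h1, one_smul]
        _ = x.fst • (x.fst • y.snd + y.fst • x.snd) := by rw [smul_add]
        _ = 0 := by rw [hsnd, smul_zero]
  · rintro ⟨hs, hm⟩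
    obtain ⟨t, hst, hts⟩ := isUnit_iff_exists.mp hs
    obtain ⟨n, hmn, hnm⟩ := isAddUnit_iff_exists.mp hm
    refine isUnit_iff_exists.mpr ⟨⟨t, t • t • n⟩, ?_, ?_⟩
    · ext
      · exact hst
      · show x.fst • (t • t • n) + MulOpposite.op t • x.snd = 0
        rw [op_smul_eq_smul, smul_smul, smul_smul, hst, one_mul, ← smul_add, hnm, smul_zero]
    · ext
      · exact hts
      · show t • x.snd + MulOpposite.op x.fst • (t • t • n) = 0
        rw [op_smul_eq_smul, smul_smul, smul_smul, hst, one_mul, ← smul_add, hmn, smul_zero]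
end

section
/- An element (s,m) of the expectation semiring S ⊕̃ M is a zero-divisor if and only if s ∈ Z(S) ∪ Z(M); that is, Z(S ⊕̃ M) = {(s,m) : s ∈ Z(S) ∪ Z(M), m ∈ M}. -/
/-- For M nonzero, (s,m) is a zero-divisor of S ⊕̃ M iff
s ∈ Z(S) ∪ Z(M). -/
theorem stmt17 (S M : Type*) [CommSemiring S] [AddCommMonoid M] [Module S M]
    (hM : ∃ m : M, m ≠ 0) (x : TrivSqZeroExt S M) :
    (∃ y : TrivSqZeroExt S M, y ≠ 0 ∧ x * y = 0) ↔
      ((∃ t : S, t ≠ 0 ∧ x.fst * t = 0) ∨ (∃ m : M, m ≠ 0 ∧ x.fst • m = 0)) := by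
  constructor
  · rintro ⟨y, hy, hxy⟩
    have h1 : x.fst * y.fst = 0 := by
      have := congrArg TrivSqZeroExt.fst hxy
      simpa using this
    have h2 : x.fst • y.snd + y.fst • x.snd = 0 := by
      have := congrArg TrivSqZeroExt.snd hxy
      simpa [TrivSqZeroExt.snd_mul, op_smul_eq_smul] using this
    by_cases ht : y.fst = 0
    · right
      refine ⟨y.snd, ?_, ?_⟩
      · intro hn
        exact hy (TrivSqZeroExt.ext ht hn)
      · simpa [ht] using h2
    · exact Or.inl ⟨y.fst, ht, h1⟩
  · rintro (⟨t, ht, hst⟩ | ⟨n, hn, hsn⟩)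
    · by_cases htm : t • x.snd = 0
      · refine ⟨TrivSqZeroExt.inl t, ?_, ?_⟩
        · intro h
          exact ht (by simpa using congrArg TrivSqZeroExt.fst h)
        · apply TrivSqZeroExt.ext
          · simpa using hst
          · simpa [op_smul_eq_smul] using htm
      · refine ⟨TrivSqZeroExt.inr (t • x.snd), ?_, ?_⟩
        · intro h
          exact htm (by simpa using congrArg TrivSqZeroExt.snd h)
        · apply TrivSqZeroExt.ext
          · simp
          · simp [smul_smul, mul_comm t x.fst, hst]
    · refine ⟨TrivSqZeroExt.inr n, ?_, ?_⟩
      · intro h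
        exact hn (by simpa using congrArg TrivSqZeroExt.snd h)
      · apply TrivSqZeroExt.ext
        · simp
        · simp [hsn]
end

section
/- The expectation semiring S ⊕̃ M is présimplifiable if and only if V(M) = M and both S and M are présimplifiable. Here a semiring S is présimplifiable if st = t implies s is a unit or t = 0, and an S-semimodule M is présimplifiable if sm = m implies s is a unit or m = 0. -/
open TrivSqZeroExt in
lemma aux_unit {S M : Type*} [CommSemiring S] [AddCommMonoid M] [Module S M]
    {x : TrivSqZeroExt S M} (hs : IsUnit x.fst) (hm : IsAddUnit x.snd) :
    IsUnit x := by
  obtain ⟨t, ht⟩ := hs.exists_right_inv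
  obtain ⟨n, hn, hn'⟩ := isAddUnit_iff_exists.mp
    (hm.map (DistribMulAction.toAddMonoidHom M t))
  simp only [DistribMulAction.toAddMonoidHom_apply] at hn hn'
  refine isUnit_iff_exists.mpr ⟨inl t + inr (t • n), ?_, ?_⟩ <;>
    refine TrivSqZeroExt.ext ?_ ?_ <;>
    simp [fst_mul, snd_mul, op_smul_eq_smul, smul_smul, ht, mul_comm t x.fst, hn, hn',
      add_comm (t • x.snd) n]

open TrivSqZeroExt in
lemma aux_addUnit {S M : Type*} [CommSemiring S] [AddCommMonoid M] [Module S M]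
    {x : TrivSqZeroExt S M} (hx : IsUnit x) (h1 : x.fst = 1) : IsAddUnit x.snd := by
  obtain ⟨y, hy, -⟩ := isUnit_iff_exists.mp hx
  have hf : x.fst * y.fst = 1 := by rw [← fst_mul, hy, fst_one]
  have hs := congrArg TrivSqZeroExt.snd hy
  rw [snd_mul, snd_one] at hs
  rw [h1, one_mul] at hf
  rw [h1, one_smul, hf, op_smul_eq_smul, one_smul] at hs
  exact isAddUnit_iff_exists.mpr ⟨y.snd, by rw [add_comm]; exact hs, hs⟩

/-- S ⊕̃ M is présimplifiable iff V(M) = M and both S and M are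
présimplifiable. -/
theorem stmt19 (S M : Type*) [CommSemiring S] [AddCommMonoid M] [Module S M] :
    (∀ x t : TrivSqZeroExt S M, x * t = t → IsUnit x ∨ t = 0) ↔
      ((∀ m : M, IsAddUnit m) ∧
        (∀ s t : S, s * t = t → IsUnit s ∨ t = 0) ∧
        (∀ (s : S) (m : M), s • m = m → IsUnit s ∨ m = 0)) := by
  open TrivSqZeroExt in
  constructor
  · intro h
    refine ⟨fun m => ?_, fun s t hst => ?_, fun s m hsm => ?_⟩
    · by_cases hM0 : ∀ n : M, n = 0
      · rw [hM0 m]; exact isAddUnit_zero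
      · push_neg at hM0
        obtain ⟨n, hn⟩ := hM0
        have hmul : ((inl 1 + inr m : TrivSqZeroExt S M)) * inr n = inr n := by
          refine TrivSqZeroExt.ext ?_ ?_ <;>
            simp [fst_mul, snd_mul, op_smul_eq_smul]
        rcases h _ _ hmul with hu | h0
        · have := aux_addUnit hu (by simp)
          simpa using this
        · exact absurd (by simpa using congr_arg TrivSqZeroExt.snd h0) hn
    · have hmul : (inl s : TrivSqZeroExt S M) * inl t = inl t := by
        rw [← inl_mul, hst]
      rcases h _ _ hmul with hu | h0
      · exact Or.inl (by simpa using hu.map (fstHom S S M))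
      · exact Or.inr (by simpa using congr_arg TrivSqZeroExt.fst h0)
    · have hmul : (inl s : TrivSqZeroExt S M) * inr m = inr m := by
        rw [inl_mul_inr, hsm]
      rcases h _ _ hmul with hu | h0
      · exact Or.inl (by simpa using hu.map (fstHom S S M))
      · exact Or.inr (by simpa using congr_arg TrivSqZeroExt.snd h0)
  · rintro ⟨hV, hS, hM⟩ x t hxt
    have hf : x.fst * t.fst = t.fst := by rw [← fst_mul, hxt]
    rcases hS _ _ hf with hu | h0
    · exact Or.inl (aux_unit hu (hV _))
    · have hs : x.fst • t.snd = t.snd := by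
        have := congr_arg TrivSqZeroExt.snd hxt
        rwa [snd_mul, h0, MulOpposite.op_zero, zero_smul, add_zero] at this
      rcases hM _ _ hs with hu | h0'
      · exact Or.inl (aux_unit hu (hV _))
      · exact Or.inr (TrivSqZeroExt.ext h0 h0')
end
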